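/- The Airy function Ai is twice differentiable on ℝ and satisfies the Airy differential equation Ai''(x) = x · Ai(x) for all real x. -/

import Mathlib

open Real Filter MeasureTheory

/-- Physicists' Hermite polynomial `H_n(x) = (-1)^n e^{x²} (d^n/dx^n) e^{-x²}`. -/
noncomputable def physHermite (n : ℕ) (x : ℝ) : ℝ :=
  (-1 : ℝ) ^ n * Real.exp (x ^ 2) * iteratedDeriv n (fun t : ℝ => Real.exp (-t ^ 2)) x

/-- Normalizing constant `h_n = √π 2^n n!`. -/
noncomputable def hNorm (n : ℕ) : ℝ := Real.sqrt Real.pi * 2 ^ n * (n.factorial : ℝ)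

/-- Oscillator wave function `φ_n(x) = h_n^{-1/2} e^{-x²/2} H_n(x)`. -/
noncomputable def osc (n : ℕ) (x : ℝ) : ℝ :=
  hNorm n ^ (-(1 : ℝ) / 2) * Real.exp (-x ^ 2 / 2) * physHermite n x

/-- Airy function `Ai(x) = π⁻¹ lim_{R→∞} ∫₀^R cos(t³/3 + xt) dt`. -/
noncomputable def Ai (x : ℝ) : ℝ :=
  Real.pi⁻¹ *
    limUnder Filter.atTop (fun R : ℝ => ∫ t in (0 : ℝ)..R, Real.cos (t ^ 3 / 3 + x * t))

/-- Scaling constant `τ_N = 2^{-1/2} N^{-1/6}`. -/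
noncomputable def tauN (N : ℕ) : ℝ := (2 : ℝ) ^ (-(1 : ℝ) / 2) * (N : ℝ) ^ (-(1 : ℝ) / 6)

/-- `Δ_N = (√(2N+1) - √(2N-1))/τ_N`. -/
noncomputable def DeltaN (N : ℕ) : ℝ :=
  (Real.sqrt (2 * N + 1) - Real.sqrt (2 * N - 1)) / tauN N

open Complex Set Topology

/-- Auxiliary entire function `z ↦ exp(i(z³/3 + x z))`. -/
noncomputable def fA (x : ℝ) (z : ℂ) : ℂ := Complex.exp (Complex.I * (z ^ 3 / 3 + x * z))


lemma norm_fA (x : ℝ) (z : ℂ) : ‖fA x z‖ = Real.exp (-(z ^ 3 / 3 + (x:ℂ) * z).im) := by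
  rw [fA, Complex.norm_exp]
  congr 1
  simp [Complex.mul_re]

lemma norm_fA_horiz (x t : ℝ) : ‖fA x ((t:ℂ) + Complex.I)‖ = Real.exp (1/3 - x - t^2) := by
  rw [norm_fA]
  congr 1
  simp [Complex.add_im, Complex.mul_im, pow_succ, Complex.mul_re, Complex.add_re,
    Complex.div_im, Complex.normSq]
  ring

lemma norm_fA_vert (x y : ℝ) : ‖fA x ((y:ℂ) * Complex.I)‖ = Real.exp (y^3/3 - x*y) := by
  rw [norm_fA]
  congr 1
  simp [Complex.add_im, Complex.mul_im, pow_succ, Complex.mul_re, Complex.add_re,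
    Complex.div_im, Complex.normSq]
  ring

lemma norm_fA_right (x R y : ℝ) :
    ‖fA x ((R:ℂ) + (y:ℂ) * Complex.I)‖ = Real.exp (-(R^2*y - y^3/3) - x*y) := by
  rw [norm_fA]
  congr 1
  simp [Complex.add_im, Complex.mul_im, pow_succ, Complex.mul_re, Complex.add_re,
    Complex.div_im, Complex.normSq]
  ring

lemma fA_zero (x : ℝ) : fA x 0 = 1 := by simp [fA]

lemma hasDerivAt_ofReal (x : ℝ) : HasDerivAt (fun t : ℝ => (t:ℂ)) 1 x := by
  exact (hasDerivAt_id x).ofReal_comp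

lemma hasDerivAt_fA_x (z : ℂ) (x : ℝ) :
    HasDerivAt (fun x : ℝ => fA x z) (Complex.I * z * fA x z) x := by
  have h0 : HasDerivAt (fun x : ℝ => Complex.I * (z ^ 3 / 3 + (x:ℂ) * z)) (Complex.I * z) x := by
    have := (((hasDerivAt_ofReal x).mul_const z).const_add (z^3/3)).const_mul Complex.I
    simpa using this
  have := h0.cexp
  convert! this using 1
  rw [fA]; ring

lemma hasDerivAt_fA_horiz (x t : ℝ) :
    HasDerivAt (fun t : ℝ => fA x ((t:ℂ) + Complex.I))
      (Complex.I * (((t:ℂ) + Complex.I)^2 + x) * fA x ((t:ℂ) + Complex.I)) t := by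
  have h1 : HasDerivAt (fun t : ℝ => (t:ℂ) + Complex.I) 1 t :=
    (hasDerivAt_ofReal t).add_const _
  have h2 : HasDerivAt (fun t : ℝ => ((t:ℂ) + Complex.I) ^ 3 / 3)
      (((t:ℂ) + Complex.I) ^ 2) t := by
    have h := ((h1.mul h1).mul h1).div_const 3
    simp only [pow_succ, pow_zero, one_mul]
    convert! h using 1
    simp only [Pi.mul_apply]; ring
  have h3 : HasDerivAt (fun t : ℝ => (x:ℂ) * ((t:ℂ) + Complex.I)) (x:ℂ) t := by
    simpa using (h1.const_mul (x:ℂ))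
  have h4 := ((h2.add h3).const_mul Complex.I).cexp
  convert! h4 using 1
  rw [fA]; simp only [Pi.add_apply]; ring

lemma hasDerivAt_fA_vert (x y : ℝ) :
    HasDerivAt (fun y : ℝ => fA x ((y:ℂ) * Complex.I))
      (Complex.I * Complex.I * (((y:ℂ) * Complex.I)^2 + x) * fA x ((y:ℂ) * Complex.I)) y := by
  have h1 : HasDerivAt (fun y : ℝ => (y:ℂ) * Complex.I) Complex.I y :=
    by simpa using (hasDerivAt_ofReal y).mul_const Complex.I
  have h2 : HasDerivAt (fun y : ℝ => ((y:ℂ) * Complex.I) ^ 3 / 3)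
      (((y:ℂ) * Complex.I) ^ 2 * Complex.I) y := by
    have h := ((h1.mul h1).mul h1).div_const 3
    simp only [pow_succ, pow_zero, one_mul]
    convert! h using 1
    simp only [Pi.mul_apply]; ring
  have h3 : HasDerivAt (fun y : ℝ => (x:ℂ) * ((y:ℂ) * Complex.I)) ((x:ℂ) * Complex.I) y :=
    h1.const_mul (x:ℂ)
  have h4 := ((h2.add h3).const_mul Complex.I).cexp
  convert! h4 using 1
  rw [fA]; simp only [Pi.add_apply]; ring

lemma continuous_fA_horiz (x : ℝ) : Continuous fun t : ℝ => fA x ((t:ℂ) + Complex.I) := by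
  unfold fA; fun_prop

lemma continuous_fA_vert (x : ℝ) : Continuous fun y : ℝ => fA x ((y:ℂ) * Complex.I) := by
  unfold fA; fun_prop

lemma differentiable_fA (x : ℝ) : Differentiable ℂ (fA x) := by
  unfold fA
  apply Differentiable.cexp
  apply Differentiable.const_mul
  exact (differentiable_id.pow 3).div_const 3 |>.add (differentiable_id.const_mul _)

lemma poly_bound {t : ℝ} (ht : 0 ≤ t) : (t+1)^2 ≤ 8 * Real.exp (t^2/2) := by
  nlinarith [Real.add_one_le_exp (t^2/2), sq_nonneg (t-1), sq_nonneg t, Real.exp_pos (t^2/2)]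

lemma key_bound {x₀ x t : ℝ} (hx : |x - x₀| < 1) (ht : 0 ≤ t) :
    (t+1)^2 * Real.exp (1/3 - x - t^2) ≤ Real.exp (4/3 + |x₀|) * (8 * Real.exp (-(t^2/2))) := by
  have h1 : (t+1)^2 * Real.exp (1/3 - x - t^2) ≤ 8*Real.exp (t^2/2) * Real.exp (1/3 - x - t^2) :=
    mul_le_mul_of_nonneg_right (poly_bound ht) (Real.exp_pos _).le
  have h2 : Real.exp (t^2/2) * Real.exp (1/3 - x - t^2) = Real.exp (1/3 - x - t^2/2) := by
    rw [← Real.exp_add]; ring_nf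
  have h3 : Real.exp (1/3 - x - t^2/2) ≤ Real.exp (4/3 + |x₀|) * Real.exp (-(t^2/2)) := by
    rw [← Real.exp_add]
    apply Real.exp_le_exp.2
    have h4 := abs_sub_abs_le_abs_sub x x₀
    have h5 := neg_abs_le x
    linarith
  calc (t+1)^2 * Real.exp (1/3 - x - t^2)
      ≤ 8 * (Real.exp (t^2/2) * Real.exp (1/3 - x - t^2)) := by linarith
    _ = 8 * Real.exp (1/3 - x - t^2/2) := by rw [h2]
    _ ≤ 8 * (Real.exp (4/3 + |x₀|) * Real.exp (-(t^2/2))) := by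
        have := h3; nlinarith [Real.exp_pos (1/3 - x - t^2/2)]
    _ = Real.exp (4/3 + |x₀|) * (8 * Real.exp (-(t^2/2))) := by ring

lemma boundFn_integrable (x₀ : ℝ) :
    Integrable (fun t : ℝ => Real.exp (4/3 + |x₀|) * (8 * Real.exp (-(t^2/2)))) := by
  have : Integrable (fun t : ℝ => Real.exp (-(1/2) * t^2)) :=
    integrable_exp_neg_mul_sq (by norm_num)
  have := (this.const_mul 8).const_mul (Real.exp (4/3 + |x₀|))
  refine this.congr (Filter.Eventually.of_forall fun t => ?_)
  ring_nf

lemma norm_tI_le (t : ℝ) (ht : 0 ≤ t) : ‖(t:ℂ) + Complex.I‖ ≤ t + 1 := by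
  calc ‖(t:ℂ) + Complex.I‖ ≤ ‖(t:ℂ)‖ + ‖Complex.I‖ := norm_add_le _ _
    _ = |t| + 1 := by simp
    _ = t + 1 := by rw [_root_.abs_of_nonneg ht]

lemma horiz_int (x : ℝ) : IntegrableOn (fun t : ℝ => fA x ((t:ℂ) + Complex.I)) (Ioi 0) := by
  have hg : Integrable (fun t : ℝ => Real.exp (1/3 - x) * Real.exp (-1 * t^2)) :=
    (integrable_exp_neg_mul_sq one_pos).const_mul _
  refine ((hg.restrict (s := Ioi 0)).mono' ((continuous_fA_horiz x).aestronglyMeasurable)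
    (Filter.Eventually.of_forall fun t => ?_))
  rw [norm_fA_horiz, ← Real.exp_add]
  apply Real.exp_le_exp.2; ring_nf; rfl

lemma hasDerivAt_Hh (x₀ : ℝ) :
    Integrable ((fun t : ℝ => Complex.I * ((t:ℂ) + Complex.I) * fA x₀ ((t:ℂ) + Complex.I)))
      (volume.restrict (Ioi 0)) ∧
    HasDerivAt (fun x => ∫ t in Ioi (0:ℝ), fA x ((t:ℂ) + Complex.I))
      (∫ t in Ioi (0:ℝ), Complex.I * ((t:ℂ) + Complex.I) * fA x₀ ((t:ℂ) + Complex.I)) x₀ := by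
  apply hasDerivAt_integral_of_dominated_loc_of_deriv_le
    (F := fun (x : ℝ) (t : ℝ) => fA x ((t:ℂ) + Complex.I))
    (F' := fun (x : ℝ) (t : ℝ) => Complex.I * ((t:ℂ) + Complex.I) * fA x ((t:ℂ) + Complex.I))
    (μ := volume.restrict (Ioi 0))
    (bound := fun t : ℝ => Real.exp (4/3 + |x₀|) * (8 * Real.exp (-(t^2/2)))) (Metric.ball_mem_nhds x₀ one_pos)
  · exact Filter.Eventually.of_forall fun x => (continuous_fA_horiz x).aestronglyMeasurable
  · exact horiz_int x₀
  · exact Continuous.aestronglyMeasurable (by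
      exact (continuous_const.mul (Complex.continuous_ofReal.add continuous_const)).mul
        (continuous_fA_horiz x₀))
  · filter_upwards [ae_restrict_mem measurableSet_Ioi] with t ht x hx
    have ht' : (0:ℝ) ≤ t := le_of_lt ht
    have hx' : |x - x₀| < 1 := by simpa [Real.dist_eq] using hx
    calc ‖Complex.I * ((t:ℂ) + Complex.I) * fA x ((t:ℂ) + Complex.I)‖
        = ‖(t:ℂ) + Complex.I‖ * ‖fA x ((t:ℂ) + Complex.I)‖ := by
          simp [norm_mul]
      _ ≤ (t+1)^2 * Real.exp (1/3 - x - t^2) := by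
          rw [norm_fA_horiz]
          apply mul_le_mul_of_nonneg_right _ (Real.exp_pos _).le
          calc ‖(t:ℂ) + Complex.I‖ ≤ t + 1 := norm_tI_le t ht'
            _ ≤ (t+1)^2 := by nlinarith
      _ ≤ _ := key_bound hx' ht'
  · exact (boundFn_integrable x₀).restrict
  · filter_upwards [ae_restrict_mem measurableSet_Ioi] with t _ x _
    exact hasDerivAt_fA_x _ x

lemma hasDerivAt_Hh2 (x₀ : ℝ) :
    Integrable ((fun t : ℝ => (Complex.I * ((t:ℂ) + Complex.I))^2 * fA x₀ ((t:ℂ) + Complex.I)))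
      (volume.restrict (Ioi 0)) ∧
    HasDerivAt (fun x => ∫ t in Ioi (0:ℝ), Complex.I * ((t:ℂ) + Complex.I) * fA x ((t:ℂ) + Complex.I))
      (∫ t in Ioi (0:ℝ), (Complex.I * ((t:ℂ) + Complex.I))^2 * fA x₀ ((t:ℂ) + Complex.I)) x₀ := by
  refine hasDerivAt_integral_of_dominated_loc_of_deriv_le
    (F := fun (x : ℝ) (t : ℝ) => Complex.I * ((t:ℂ) + Complex.I) * fA x ((t:ℂ) + Complex.I))
    (F' := fun (x : ℝ) (t : ℝ) => (Complex.I * ((t:ℂ) + Complex.I))^2 * fA x ((t:ℂ) + Complex.I))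
    (μ := volume.restrict (Ioi 0))
    (bound := fun t : ℝ => Real.exp (4/3 + |x₀|) * (8 * Real.exp (-(t^2/2)))) (Metric.ball_mem_nhds x₀ one_pos)
    ?_ ?_ ?_ ?_ ?_ ?_
  · exact Filter.Eventually.of_forall fun x =>
      (((continuous_const.mul (Complex.continuous_ofReal.add continuous_const)).mul
        (continuous_fA_horiz x))).aestronglyMeasurable
  · exact (hasDerivAt_Hh x₀).1
  · exact ((((continuous_const.mul (Complex.continuous_ofReal.add continuous_const)).pow 2)).mul
      (continuous_fA_horiz x₀)).aestronglyMeasurable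
  · filter_upwards [ae_restrict_mem measurableSet_Ioi] with t ht x hx
    have ht' : (0:ℝ) ≤ t := le_of_lt ht
    have hx' : |x - x₀| < 1 := by simpa [Real.dist_eq] using hx
    calc ‖(Complex.I * ((t:ℂ) + Complex.I))^2 * fA x ((t:ℂ) + Complex.I)‖
        = ‖(t:ℂ) + Complex.I‖^2 * ‖fA x ((t:ℂ) + Complex.I)‖ := by
          simp [norm_mul, norm_pow]
      _ ≤ (t+1)^2 * Real.exp (1/3 - x - t^2) := by
          rw [norm_fA_horiz]
          apply mul_le_mul_of_nonneg_right _ (Real.exp_pos _).le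
          exact pow_le_pow_left₀ (norm_nonneg _) (norm_tI_le t ht') 2
      _ ≤ _ := key_bound hx' ht'
  · exact (boundFn_integrable x₀).restrict
  · filter_upwards [ae_restrict_mem measurableSet_Ioi] with t _ x _
    have := (hasDerivAt_fA_x ((t:ℂ) + Complex.I) x).const_mul (Complex.I * ((t:ℂ) + Complex.I))
    convert! this using 1
    ring

lemma vert_exp_le {x₀ x y : ℝ} (hx : |x - x₀| < 1) (hy : y ∈ Set.Ioc (0:ℝ) 1) :
    Real.exp (y^3/3 - x*y) ≤ Real.exp (4/3 + |x₀|) := by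
  apply Real.exp_le_exp.2
  have h1 : y^3 ≤ 1 := pow_le_one₀ hy.1.le hy.2
  have h2 : -(x*y) ≤ |x| := by
    calc -(x*y) ≤ |x*y| := neg_le_abs _
      _ = |x| * |y| := abs_mul x y
      _ ≤ |x| * 1 := by
          apply mul_le_mul_of_nonneg_left _ (abs_nonneg x)
          rw [_root_.abs_of_nonneg hy.1.le]; exact hy.2
      _ = |x| := mul_one _
  have h3 : |x| ≤ |x₀| + 1 := by
    have := abs_sub_abs_le_abs_sub x x₀
    linarith
  linarith

lemma hasDerivAt_Hv (x₀ : ℝ) :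
    HasDerivAt (fun x => ∫ y in (0:ℝ)..1, fA x ((y:ℂ) * Complex.I))
      (∫ y in (0:ℝ)..1, Complex.I * ((y:ℂ) * Complex.I) * fA x₀ ((y:ℂ) * Complex.I)) x₀ := by
  refine (intervalIntegral.hasDerivAt_integral_of_dominated_loc_of_deriv_le
    (F := fun (x : ℝ) (y : ℝ) => fA x ((y:ℂ) * Complex.I))
    (F' := fun (x : ℝ) (y : ℝ) => Complex.I * ((y:ℂ) * Complex.I) * fA x ((y:ℂ) * Complex.I))
    (bound := fun _ : ℝ => Real.exp (4/3 + |x₀|)) (Metric.ball_mem_nhds x₀ one_pos) ?_ ?_ ?_ ?_ ?_ ?_).2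
  · exact Filter.Eventually.of_forall fun x => (continuous_fA_vert x).aestronglyMeasurable
  · exact (continuous_fA_vert x₀).intervalIntegrable _ _
  · exact ((continuous_const.mul (Complex.continuous_ofReal.mul continuous_const)).mul
      (continuous_fA_vert x₀)).aestronglyMeasurable
  · refine Filter.Eventually.of_forall fun y hy x hx => ?_
    rw [Set.uIoc_of_le (by norm_num : (0:ℝ) ≤ 1)] at hy
    have hx' : |x - x₀| < 1 := by simpa [Real.dist_eq] using hx
    calc ‖Complex.I * ((y:ℂ) * Complex.I) * fA x ((y:ℂ) * Complex.I)‖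
        = |y| * ‖fA x ((y:ℂ) * Complex.I)‖ := by simp [norm_mul]
      _ ≤ 1 * Real.exp (4/3 + |x₀|) := by
          apply mul_le_mul
          · rw [_root_.abs_of_nonneg hy.1.le]; exact hy.2
          · rw [norm_fA_vert]; exact vert_exp_le hx' hy
          · exact norm_nonneg _
          · norm_num
      _ = _ := one_mul _
  · exact intervalIntegrable_const
  · refine Filter.Eventually.of_forall fun y _ x _ => hasDerivAt_fA_x _ x

lemma hasDerivAt_Hv2 (x₀ : ℝ) :
    HasDerivAt (fun x => ∫ y in (0:ℝ)..1, Complex.I * ((y:ℂ) * Complex.I) * fA x ((y:ℂ) * Complex.I))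
      (∫ y in (0:ℝ)..1, (Complex.I * ((y:ℂ) * Complex.I))^2 * fA x₀ ((y:ℂ) * Complex.I)) x₀ := by
  refine (intervalIntegral.hasDerivAt_integral_of_dominated_loc_of_deriv_le
    (F := fun (x : ℝ) (y : ℝ) => Complex.I * ((y:ℂ) * Complex.I) * fA x ((y:ℂ) * Complex.I))
    (F' := fun (x : ℝ) (y : ℝ) => (Complex.I * ((y:ℂ) * Complex.I))^2 * fA x ((y:ℂ) * Complex.I))
    (bound := fun _ : ℝ => Real.exp (4/3 + |x₀|)) (Metric.ball_mem_nhds x₀ one_pos) ?_ ?_ ?_ ?_ ?_ ?_).2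
  · exact Filter.Eventually.of_forall fun x =>
      ((continuous_const.mul (Complex.continuous_ofReal.mul continuous_const)).mul
      (continuous_fA_vert x)).aestronglyMeasurable
  · exact ((continuous_const.mul (Complex.continuous_ofReal.mul continuous_const)).mul
      (continuous_fA_vert x₀)).intervalIntegrable _ _
  · exact (((continuous_const.mul (Complex.continuous_ofReal.mul continuous_const)).pow 2).mul
      (continuous_fA_vert x₀)).aestronglyMeasurable
  · refine Filter.Eventually.of_forall fun y hy x hx => ?_
    rw [Set.uIoc_of_le (by norm_num : (0:ℝ) ≤ 1)] at hy
    have hx' : |x - x₀| < 1 := by simpa [Real.dist_eq] using hx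
    calc ‖(Complex.I * ((y:ℂ) * Complex.I))^2 * fA x ((y:ℂ) * Complex.I)‖
        = |y|^2 * ‖fA x ((y:ℂ) * Complex.I)‖ := by simp [norm_mul, norm_pow]
      _ ≤ 1 * Real.exp (4/3 + |x₀|) := by
          apply mul_le_mul
          · have : |y| ≤ 1 := by rw [_root_.abs_of_nonneg hy.1.le]; exact hy.2
            nlinarith [abs_nonneg y]
          · rw [norm_fA_vert]; exact vert_exp_le hx' hy
          · exact norm_nonneg _
          · norm_num
      _ = _ := one_mul _
  · exact intervalIntegrable_const
  · refine Filter.Eventually.of_forall fun y _ x _ => ?_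
    have := (hasDerivAt_fA_x ((y:ℂ) * Complex.I) x).const_mul (Complex.I * ((y:ℂ) * Complex.I))
    convert! this using 1
    ring

lemma hh2_int (x : ℝ) :
    Integrable ((fun t : ℝ => (Complex.I * ((t:ℂ) + Complex.I))^2 * fA x ((t:ℂ) + Complex.I)))
      (volume.restrict (Ioi 0)) := (hasDerivAt_Hh2 x).1

lemma tendsto_fA_horiz (x : ℝ) :
    Tendsto (fun t : ℝ => fA x ((t:ℂ) + Complex.I)) atTop (𝓝 0) := by
  rw [tendsto_zero_iff_norm_tendsto_zero]
  simp_rw [norm_fA_horiz]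
  apply Real.tendsto_exp_atBot.comp
  have h1 : Tendsto (fun t : ℝ => t^2) atTop atTop := tendsto_pow_atTop two_ne_zero
  have h2 : Tendsto (fun t : ℝ => -(t^2)) atTop atBot := tendsto_neg_atTop_atBot.comp h1
  have h3 := tendsto_atBot_add_const_left atTop (1/3 - x) h2
  refine h3.congr fun t => by ring

lemma horiz_deriv_int (x : ℝ) :
    IntegrableOn (fun t : ℝ =>
      Complex.I * (((t:ℂ) + Complex.I)^2 + x) * fA x ((t:ℂ) + Complex.I)) (Ioi 0) := by
  have e1 := (hh2_int x).const_mul (-Complex.I)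
  have e2 := (horiz_int x).const_mul (Complex.I * x)
  refine (e1.add e2).congr (Filter.Eventually.of_forall fun t => ?_)
  have hI : Complex.I * Complex.I = -1 := Complex.I_mul_I
  simp only [Pi.add_apply]
  linear_combination (-Complex.I * ((t:ℂ)+Complex.I)^2 * fA x ((t:ℂ)+Complex.I)) * hI

lemma horiz_ftc (x : ℝ) :
    ∫ t in Ioi (0:ℝ), Complex.I * (((t:ℂ) + Complex.I)^2 + x) * fA x ((t:ℂ) + Complex.I)
      = - fA x Complex.I := by
  have h := integral_Ioi_of_hasDerivAt_of_tendsto (a := (0:ℝ)) (m := 0)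
    (f := fun t : ℝ => fA x ((t:ℂ) + Complex.I))
    (f' := fun t : ℝ => Complex.I * (((t:ℂ) + Complex.I)^2 + x) * fA x ((t:ℂ) + Complex.I))
    (continuous_fA_horiz x).continuousWithinAt
    (fun t _ => hasDerivAt_fA_horiz x t) (horiz_deriv_int x) (tendsto_fA_horiz x)
  rw [h]
  norm_num

lemma vert_ftc (x : ℝ) :
    ∫ y in (0:ℝ)..1, (-(((y:ℂ) * Complex.I)^2) - x) * fA x ((y:ℂ) * Complex.I)
      = fA x Complex.I - 1 := by
  have h := intervalIntegral.integral_eq_sub_of_hasDerivAt (a := (0:ℝ)) (b := 1)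
    (f := fun y : ℝ => fA x ((y:ℂ) * Complex.I))
    (f' := fun y : ℝ => (-(((y:ℂ) * Complex.I)^2) - x) * fA x ((y:ℂ) * Complex.I))
    (fun y _ => by
      have := hasDerivAt_fA_vert x y
      convert! this using 1
      have hI : Complex.I * Complex.I = -1 := Complex.I_mul_I
      linear_combination (-(((y:ℂ) * Complex.I)^2 + x) * fA x ((y:ℂ) * Complex.I)) * hI)
    (Continuous.intervalIntegrable (by
      refine Continuous.mul ?_ (continuous_fA_vert x)
      fun_prop) _ _)
  rw [h]
  norm_num [fA_zero]

noncomputable def Hv (x : ℝ) : ℂ := ∫ y in (0:ℝ)..1, fA x ((y:ℂ) * Complex.I)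
noncomputable def Hv2 (x : ℝ) : ℂ :=
  ∫ y in (0:ℝ)..1, (Complex.I * ((y:ℂ) * Complex.I))^2 * fA x ((y:ℂ) * Complex.I)
noncomputable def Hh (x : ℝ) : ℂ := ∫ t in Ioi (0:ℝ), fA x ((t:ℂ) + Complex.I)
noncomputable def Hh2 (x : ℝ) : ℂ :=
  ∫ t in Ioi (0:ℝ), (Complex.I * ((t:ℂ) + Complex.I))^2 * fA x ((t:ℂ) + Complex.I)

lemma HH_ode (x : ℝ) :
    Complex.I * Hv2 x + Hh2 x = x * (Complex.I * Hv x + Hh x) - Complex.I := by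
  have hI : Complex.I * Complex.I = -1 := Complex.I_mul_I
  have hA : Hv2 x - x * Hv x = fA x Complex.I - 1 := by
    have i1 : IntervalIntegrable
        (fun y : ℝ => (Complex.I * ((y:ℂ) * Complex.I))^2 * fA x ((y:ℂ) * Complex.I))
        volume 0 1 :=
      (((continuous_const.mul (Complex.continuous_ofReal.mul continuous_const)).pow 2).mul
        (continuous_fA_vert x)).intervalIntegrable _ _
    have i2 : IntervalIntegrable (fun y : ℝ => (x:ℂ) * fA x ((y:ℂ) * Complex.I)) volume 0 1 :=
      (continuous_const.mul (continuous_fA_vert x)).intervalIntegrable _ _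
    rw [Hv2, Hv, ← intervalIntegral.integral_const_mul, ← intervalIntegral.integral_sub i1 i2,
      ← vert_ftc x]
    apply intervalIntegral.integral_congr
    intro y _
    linear_combination (((y:ℂ) * Complex.I)^2 * fA x ((y:ℂ) * Complex.I)) * hI
  have hB : Hh2 x - x * Hh x = Complex.I * - fA x Complex.I := by
    have i2 : Integrable (fun t : ℝ => (x:ℂ) * fA x ((t:ℂ) + Complex.I))
        (volume.restrict (Ioi 0)) := (horiz_int x).const_mul _
    rw [Hh2, Hh, ← integral_const_mul, ← integral_sub (hh2_int x) i2, ← horiz_ftc x,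
      ← integral_const_mul Complex.I]
    apply integral_congr_ae
    refine Filter.Eventually.of_forall fun t => ?_
    linear_combination (-(x:ℂ) * fA x ((t:ℂ) + Complex.I)) * hI
  linear_combination Complex.I * hA + hB

lemma continuous_fA_real (x : ℝ) : Continuous fun t : ℝ => fA x (t:ℂ) := by
  unfold fA; fun_prop

lemma rect (x R : ℝ) :
    ∫ t in (0:ℝ)..R, fA x (t:ℂ) =
      (∫ t in (0:ℝ)..R, fA x ((t:ℂ) + Complex.I)) + Complex.I • Hv x -
        Complex.I • (∫ y in (0:ℝ)..1, fA x ((R:ℂ) + (y:ℂ) * Complex.I)) := by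
  have h := Complex.integral_boundary_rect_eq_zero_of_differentiableOn (fA x) 0
    ((R:ℂ) + Complex.I) ((differentiable_fA x).differentiableOn)
  simp only [Complex.zero_re, Complex.zero_im, Complex.add_re, Complex.ofReal_re,
    Complex.I_re, Complex.add_im, Complex.I_im, Complex.ofReal_im, Complex.ofReal_zero,
    zero_mul, add_zero, zero_add, Complex.ofReal_one, one_mul, smul_eq_mul] at h
  simp only [Hv, smul_eq_mul]
  linear_combination h

lemma re_int (x R : ℝ) :
    ∫ t in (0:ℝ)..R, Real.cos (t ^ 3 / 3 + x * t) = (∫ t in (0:ℝ)..R, fA x (t:ℂ)).re := by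
  have hf : IntervalIntegrable (fun t : ℝ => fA x (t:ℂ)) volume 0 R :=
    (continuous_fA_real x).intervalIntegrable _ _
  have h := Complex.reCLM.intervalIntegral_comp_comm hf
  rw [show (∫ t in (0:ℝ)..R, fA x (t:ℂ)).re = Complex.reCLM (∫ t in (0:ℝ)..R, fA x (t:ℂ)) from rfl,
    ← h]
  apply intervalIntegral.integral_congr
  intro t _
  show Real.cos _ = (fA x (t:ℂ)).re
  rw [fA, show Complex.I * ((t:ℂ)^3/3 + x*t) = ((t^3/3 + x*t : ℝ) : ℂ) * Complex.I by
    push_cast; ring]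
  rw [Complex.exp_ofReal_mul_I_re]

lemma arc_tendsto (x : ℝ) :
    Tendsto (fun R : ℝ => ∫ y in (0:ℝ)..1, fA x ((R:ℂ) + (y:ℂ) * Complex.I)) atTop (𝓝 0) := by
  apply squeeze_zero_norm' (a := fun R : ℝ => Real.exp (1/3 + |x|) * (R^2)⁻¹)
  · filter_upwards [eventually_ge_atTop (1:ℝ)] with R hR
    have hR0 : (0:ℝ) < R := lt_of_lt_of_le one_pos hR
    have hR2 : (0:ℝ) < R^2 := by positivity
    have hb : ∀ y ∈ Set.uIoc (0:ℝ) 1, ‖fA x ((R:ℂ) + (y:ℂ) * Complex.I)‖ ≤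
        Real.exp (1/3 + |x|) * Real.exp (-(R^2) * y) := by
      intro y hy
      rw [Set.uIoc_of_le (by norm_num : (0:ℝ) ≤ 1)] at hy
      rw [norm_fA_right, ← Real.exp_add]
      apply Real.exp_le_exp.2
      have h1 : y^3 ≤ 1 := pow_le_one₀ hy.1.le hy.2
      have h2 : -(x*y) ≤ |x| := by
        calc -(x*y) ≤ |x*y| := neg_le_abs _
          _ = |x| * |y| := abs_mul x y
          _ ≤ |x| * 1 := by
              apply mul_le_mul_of_nonneg_left _ (abs_nonneg x)
              rw [_root_.abs_of_nonneg hy.1.le]; exact hy.2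
          _ = |x| := mul_one _
      nlinarith
    have hgi : IntervalIntegrable (fun y : ℝ => Real.exp (1/3 + |x|) * Real.exp (-(R^2) * y))
        volume 0 1 := (Continuous.intervalIntegrable (by fun_prop) _ _)
    have hle := intervalIntegral.norm_integral_le_abs_of_norm_le
      ((ae_restrict_mem measurableSet_uIoc).mono hb) hgi
    refine hle.trans ?_
    have hval : ∫ y in (0:ℝ)..1, Real.exp (1/3 + |x|) * Real.exp (-(R^2) * y)
        = Real.exp (1/3 + |x|) * ((1 - Real.exp (-(R^2))) / R^2) := by
      rw [intervalIntegral.integral_const_mul]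
      congr 1
      have hd : ∀ y ∈ Set.uIcc (0:ℝ) 1, HasDerivAt (fun y : ℝ => -Real.exp (-(R^2)*y)/R^2)
          (Real.exp (-(R^2)*y)) y := by
        intro y _
        have h1 : HasDerivAt (fun y : ℝ => -(R^2)*y) (-(R^2)) y := by
          simpa using (hasDerivAt_id y).const_mul (-(R^2))
        have h2 := ((h1.exp).div_const (R^2)).neg
        convert! h2 using 1
        · funext u
          rw [neg_div]; rfl
        · rw [mul_neg, neg_div, neg_neg, mul_div_assoc, div_self (ne_of_gt hR2), mul_one]
      rw [intervalIntegral.integral_eq_sub_of_hasDerivAt hd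
        (Continuous.intervalIntegrable (by fun_prop) _ _)]
      field_simp [ne_of_gt hR2]
      simp only [mul_zero, mul_one, neg_zero, Real.exp_zero]; ring
    rw [hval]
    have h3 : (1 - Real.exp (-(R^2))) / R^2 ≤ (R^2)⁻¹ := by
      rw [div_le_iff₀ hR2, inv_mul_cancel₀ (ne_of_gt hR2)]
      nlinarith [Real.exp_pos (-(R^2))]
    have h4 := mul_le_mul_of_nonneg_left h3 (Real.exp_pos (1/3 + |x|)).le
    have h5 : Real.exp (-(R^2)) ≤ 1 := Real.exp_le_one_iff.2 (neg_nonpos.2 (sq_nonneg R))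
    rw [_root_.abs_of_nonneg (mul_nonneg (Real.exp_pos _).le
      (div_nonneg (by linarith) hR2.le))]
    linarith
  · have h1 : Tendsto (fun R : ℝ => R^2) atTop atTop := tendsto_pow_atTop two_ne_zero
    have h2 := (tendsto_inv_atTop_zero).comp h1
    have h3 := h2.const_mul (Real.exp (1/3 + |x|))
    simpa using h3

lemma tendsto_main (x : ℝ) :
    Tendsto (fun R : ℝ => ∫ t in (0:ℝ)..R, fA x (t:ℂ)) atTop
      (𝓝 (Complex.I * Hv x + Hh x)) := by
  have T1 : Tendsto (fun R : ℝ => ∫ t in (0:ℝ)..R, fA x ((t:ℂ) + Complex.I)) atTop (𝓝 (Hh x)) :=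
    intervalIntegral_tendsto_integral_Ioi 0 (horiz_int x) tendsto_id
  have T2 := (arc_tendsto x).const_smul Complex.I
  have T := (T1.add (tendsto_const_nhds (x := Complex.I • Hv x))).sub T2
  have heq : (fun R : ℝ => ∫ t in (0:ℝ)..R, fA x (t:ℂ)) =
      fun R => (∫ t in (0:ℝ)..R, fA x ((t:ℂ) + Complex.I)) + Complex.I • Hv x -
        Complex.I • (∫ y in (0:ℝ)..1, fA x ((R:ℂ) + (y:ℂ) * Complex.I)) :=
    funext fun R => rect x R
  rw [heq]
  convert T using 2
  simp [smul_eq_mul]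
  ring

lemma Ai_eq (x : ℝ) : Ai x = Real.pi⁻¹ * (Complex.I * Hv x + Hh x).re := by
  have hT : Tendsto (fun R : ℝ => ∫ t in (0:ℝ)..R, Real.cos (t ^ 3 / 3 + x * t)) atTop
      (𝓝 ((Complex.I * Hv x + Hh x).re)) := by
    have h := (Complex.continuous_re.tendsto _).comp (tendsto_main x)
    exact h.congr fun R => (re_int x R).symm
  rw [Ai, hT.limUnder_eq]

noncomputable def Hv1 (x : ℝ) : ℂ :=
  ∫ y in (0:ℝ)..1, Complex.I * ((y:ℂ) * Complex.I) * fA x ((y:ℂ) * Complex.I)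
noncomputable def Hh1 (x : ℝ) : ℂ :=
  ∫ t in Ioi (0:ℝ), Complex.I * ((t:ℂ) + Complex.I) * fA x ((t:ℂ) + Complex.I)
/-- The Airy function is twice differentiable and satisfies the Airy equation
`Ai''(x) = x Ai(x)`. -/
theorem airy_ode :
    Differentiable ℝ Ai ∧ Differentiable ℝ (deriv Ai) ∧
    ∀ x : ℝ, deriv (deriv Ai) x = x * Ai x := by
  have hAi : Ai = fun x => Real.pi⁻¹ * (Complex.I * Hv x + Hh x).re := funext Ai_eq
  have hH1 : ∀ x : ℝ, HasDerivAt (fun x => Complex.I * Hv x + Hh x)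
      (Complex.I * Hv1 x + Hh1 x) x := fun x =>
    ((hasDerivAt_Hv x).const_mul Complex.I).add (hasDerivAt_Hh x).2
  have hH2 : ∀ x : ℝ, HasDerivAt (fun x => Complex.I * Hv1 x + Hh1 x)
      (Complex.I * Hv2 x + Hh2 x) x := fun x =>
    ((hasDerivAt_Hv2 x).const_mul Complex.I).add (hasDerivAt_Hh2 x).2
  have hd1 : ∀ x : ℝ, HasDerivAt Ai (Real.pi⁻¹ * (Complex.I * Hv1 x + Hh1 x).re) x := by
    intro x
    rw [hAi]
    exact (Complex.reCLM.hasFDerivAt.comp_hasDerivAt x (hH1 x)).const_mul _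
  have hder : deriv Ai = fun x => Real.pi⁻¹ * (Complex.I * Hv1 x + Hh1 x).re :=
    funext fun x => (hd1 x).deriv
  have hd2 : ∀ x : ℝ, HasDerivAt (deriv Ai) (Real.pi⁻¹ * (Complex.I * Hv2 x + Hh2 x).re) x := by
    intro x
    rw [hder]
    exact (Complex.reCLM.hasFDerivAt.comp_hasDerivAt x (hH2 x)).const_mul _
  refine ⟨fun x => (hd1 x).differentiableAt, fun x => (hd2 x).differentiableAt, fun x => ?_⟩
  rw [(hd2 x).deriv, HH_ode x, Ai_eq x]
  simp only [Complex.sub_re, Complex.I_re, Complex.mul_re, Complex.ofReal_re, Complex.ofReal_im]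
  ring
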